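/- Let (R, G, d, c, e) be a reflexive graph in groups (d, c : R → G with common section e : G → R, d∘e = c∘e = id). If Ker(d) and Ker(c) commute elementwise in R and the ternary commutator condition holds in the sense that [[Ker(d), Ker(c)], R] = 1, then the partial composition m(β, α) = β·e(d(β))⁻¹·α (for c(β) = d(α)) defines an internal category (indeed groupoid) structure on the graph. -/

import Mathlib

/-- `m` is an internal category (groupoid) structure on the reflexive graph
`(R, G, d, c, e)` in groups: on composable pairs (`c β = d α`) the composition `m` is a
group homomorphism, respects domains and codomains, has the `e g` as identities, and is
associative. -/
def IsInternalCategoryStruct {R G : Type*} [Group R] [Group G]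
    (d c : R →* G) (e : G →* R) (m : R → R → R) : Prop :=
  (∀ β α β' α' : R, c β = d α → c β' = d α' →
      m (β * β') (α * α') = m β α * m β' α') ∧
  (∀ β α : R, c β = d α → d (m β α) = d β ∧ c (m β α) = c α) ∧
  (∀ α : R, m (e (d α)) α = α) ∧
  (∀ β : R, m β (e (c β)) = β) ∧
  (∀ β α γ : R, c β = d α → c α = d γ → m (m β α) γ = m β (m α γ))

/-- Let `(R, G, d, c, e)` be a reflexive graph in groups (`d, c : R → G` with common
section `e`). If `Ker d` and `Ker c` commute elementwise in `R`, and the ternary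
commutator condition `[[Ker d, Ker c], R] = 1` holds, then the partial composition
`m(β, α) = β·e(d α)⁻¹·α` (for `c β = d α`; note `d α = c β`) defines an internal category
— indeed groupoid — structure on the graph. -/
theorem stmt_15 {R G : Type*} [Group R] [Group G] (d c : R →* G) (e : G →* R)
    (hd : d.comp e = MonoidHom.id G) (hc : c.comp e = MonoidHom.id G)
    (hcomm : ∀ a ∈ d.ker, ∀ b ∈ c.ker, a * b = b * a)
    (hternary : ⁅⁅d.ker, c.ker⁆, (⊤ : Subgroup R)⁆ = ⊥) :
    IsInternalCategoryStruct d c e (fun β α => β * (e (d α))⁻¹ * α) ∧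
    -- and every arrow has a two-sided inverse, so the structure is a groupoid
    (∀ β : R, ∃ β' : R, d β' = c β ∧ c β' = d β ∧
      β * (e (d β'))⁻¹ * β' = e (d β) ∧ β' * (e (d β))⁻¹ * β = e (c β)) := by
  have hde : ∀ g, d (e g) = g := fun g => DFunLike.congr_fun hd g
  have hce : ∀ g, c (e g) = g := fun g => DFunLike.congr_fun hc g
  constructor
  · refine ⟨?_, ?_, ?_, ?_, ?_⟩
    · intro β α β' α' h h'
      have hx : (e (d α))⁻¹ * α ∈ d.ker := by
        simp [MonoidHom.mem_ker, hde]
      have hy : β' * (e (d α'))⁻¹ ∈ c.ker := by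
        simp [MonoidHom.mem_ker, hce, h']
      have key := hcomm _ hx _ hy
      show β * β' * (e (d (α * α')))⁻¹ * (α * α')
          = (β * (e (d α))⁻¹ * α) * (β' * (e (d α'))⁻¹ * α')
      have expand : β * β' * (e (d (α * α')))⁻¹ * (α * α')
          = β * ((β' * (e (d α'))⁻¹) * ((e (d α))⁻¹ * α)) * α' := by
        simp only [map_mul, mul_inv_rev]
        group
      rw [expand, ← key]
      group
    · intro β α h
      constructor
      · simp [hde]
      · simp [hce, ← h]
    · intro α
      simp
    · intro β
      simp [hde]
    · intro β α γ h1 h2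
      have : d (α * (e (d γ))⁻¹ * γ) = d α := by simp [hde]
      simp only [this]
      group
  · intro β
    refine ⟨e (c β) * β⁻¹ * e (d β), ?_, ?_, ?_, ?_⟩
    · simp [hde]
    · simp [hce]
    · simp [hde, hce]
      group
    · simp [hde, hce]
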